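/- Let Λ be a finitely aligned k-graph and let {w_λ : λ ∈ Λ} be the operators on ℓ²(Λ) defined by w_λ ξ_μ = δ_{s(λ), r(μ)} ξ_{λμ}, where {ξ_μ} is the canonical orthonormal basis. Then each w_λ is bounded with adjoint determined by w_λ* ξ_ν = ξ_η if ν = λη for some η, and w_λ* ξ_ν = 0 otherwise, and {w_λ : λ ∈ Λ} is a Toeplitz–Cuntz–Krieger Λ-family. -/

import Mathlib

/-- A `k`-graph: a countable small category `Λ` together with a degree functor
`d : Λ → ℕᵏ` satisfying the unique factorisation property.  Morphisms are called
paths; `comp μ ν` is the composite `μν`, only meaningful when `s μ = r ν`. -/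
structure KGraph (k : ℕ) where
  Path : Type
  Obj : Type
  pathCountable : Countable Path
  r : Path → Obj
  s : Path → Obj
  d : Path → Fin k → ℕ
  comp : Path → Path → Path
  ident : Obj → Path
  r_ident : ∀ v, r (ident v) = v
  s_ident : ∀ v, s (ident v) = v
  d_ident : ∀ v, d (ident v) = 0
  r_comp : ∀ μ ν, s μ = r ν → r (comp μ ν) = r μ
  s_comp : ∀ μ ν, s μ = r ν → s (comp μ ν) = s ν
  d_comp : ∀ μ ν, s μ = r ν → d (comp μ ν) = d μ + d ν
  ident_comp : ∀ lam, comp (ident (r lam)) lam = lam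
  comp_ident : ∀ lam, comp lam (ident (s lam)) = lam
  comp_assoc : ∀ lam μ ν, s lam = r μ → s μ = r ν →
    comp (comp lam μ) ν = comp lam (comp μ ν)
  factor : ∀ (lam : Path) (m n : Fin k → ℕ), d lam = m + n →
    ∃! p : Path × Path, s p.1 = r p.2 ∧ d p.1 = m ∧ d p.2 = n ∧ lam = comp p.1 p.2

/-- The `i`-th standard generator `e_i` of `ℕᵏ`. -/
def eVec {k : ℕ} (i : Fin k) : Fin k → ℕ := Pi.single i 1

namespace KGraph

variable {k : ℕ} (G : KGraph k)

/-- `lam` extends `μ`, i.e. `lam ∈ μΛ`. -/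
def Extends (lam μ : G.Path) : Prop := ∃ α, G.s μ = G.r α ∧ lam = G.comp μ α

/-- `CE(μ,ν)`: common extensions of `μ` and `ν`. -/
def CE (μ ν : G.Path) : Set G.Path := {lam | G.Extends lam μ ∧ G.Extends lam ν}

/-- `MCE(μ,ν)`: minimal common extensions of `μ` and `ν` (degree `d μ ⊔ d ν`). -/
def MCE (μ ν : G.Path) : Set G.Path :=
  {lam | lam ∈ G.CE μ ν ∧ G.d lam = G.d μ ⊔ G.d ν}

/-- `Λ^min(μ,ν)`: pairs `(α,β)` with `μα = νβ ∈ MCE(μ,ν)`. -/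
def minPairs (μ ν : G.Path) : Set (G.Path × G.Path) :=
  {p | G.s μ = G.r p.1 ∧ G.s ν = G.r p.2 ∧ G.comp μ p.1 = G.comp ν p.2 ∧
    G.comp μ p.1 ∈ G.MCE μ ν}

/-- `Λ` is finitely aligned if each `Λ^min(μ,ν)` is finite. -/
def FinitelyAligned : Prop := ∀ μ ν : G.Path, (G.minPairs μ ν).Finite

/-- `Λ` is locally-convex. -/
def LocallyConvex : Prop :=
  ∀ (i j : Fin k), i ≠ j → ∀ lam μ : G.Path,
    G.d lam = eVec i → G.d μ = eVec j → G.r lam = G.r μ →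
    (∃ η, G.d η = eVec j ∧ G.r η = G.s lam) ∧
    (∃ η, G.d η = eVec i ∧ G.r η = G.s μ)

/-- `Λ^{≤ n}`. -/
def LeSet (n : Fin k → ℕ) : Set G.Path :=
  {lam | G.d lam ≤ n ∧
    ∀ i, G.d lam i < n i → ¬∃ η, G.d η = eVec i ∧ G.r η = G.s lam}

open Classical in
/-- Split a path `lam` at degree `m ≤ d lam` into `(lam(0,m), lam(m, d lam))`. -/
noncomputable def split (lam : G.Path) (m : Fin k → ℕ) : G.Path × G.Path :=
  if h : m ≤ G.d lam then
    (G.factor lam m (G.d lam - m)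
      (funext fun i => (Nat.add_sub_cancel' ((Pi.le_def.mp h) i)).symm)).exists.choose
  else (lam, lam)

/-- The segment `lam(m,n)` (for `m ≤ n ≤ d lam`), of degree `n - m`. -/
noncomputable def seg (lam : G.Path) (m n : Fin k → ℕ) : G.Path :=
  (G.split (G.split lam n).1 m).2

end KGraph

noncomputable section Stmt15Aux

open scoped Classical

namespace Stmt15Aux

variable {k : ℕ} (G : KGraph k)

/-- Left cancellation for composition. -/
lemma cancel_left {lam η η' : G.Path} (h : G.s lam = G.r η) (h' : G.s lam = G.r η')
    (hc : G.comp lam η = G.comp lam η') : η = η' := by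
  have hd : G.d η = G.d η' := by
    have h0 := G.d_comp lam η h
    rw [hc, G.d_comp lam η' h'] at h0
    exact add_left_cancel h0.symm
  obtain ⟨p, _, hu⟩ := G.factor (G.comp lam η) (G.d lam) (G.d η) (G.d_comp lam η h)
  have h1 : (lam, η) = p := hu (lam, η) ⟨h, rfl, rfl, rfl⟩
  have h2 : (lam, η') = p := hu (lam, η') ⟨h', rfl, hd.symm, hc⟩
  have := h1.trans h2.symm
  exact (congrArg Prod.snd this)

/-- Strip off an initial segment: if `ν = lam·η` return `η`. -/
noncomputable def strip (lam ν : G.Path) : G.Path :=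
  if h : G.Extends ν lam then h.choose else ν

lemma strip_spec {lam ν : G.Path} (h : G.Extends ν lam) :
    G.s lam = G.r (strip G lam ν) ∧ ν = G.comp lam (strip G lam ν) := by
  rw [strip, dif_pos h]; exact h.choose_spec

lemma strip_comp {lam η : G.Path} (h : G.s lam = G.r η) :
    strip G lam (G.comp lam η) = η := by
  have he : G.Extends (G.comp lam η) lam := ⟨η, h, rfl⟩
  obtain ⟨h1, h2⟩ := strip_spec G he
  exact (cancel_left G h h1 h2).symm

lemma extends_ident {v : G.Obj} {ν : G.Path} :
    G.Extends ν (G.ident v) ↔ G.r ν = v := by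
  constructor
  · rintro ⟨α, h1, h2⟩
    rw [G.s_ident] at h1
    rw [h1] at h2 ⊢
    rw [G.ident_comp] at h2
    rw [h2]
  · intro h
    refine ⟨ν, by rw [G.s_ident, h], ?_⟩
    rw [← h]
    exact (G.ident_comp ν).symm

lemma strip_ident {v : G.Obj} {ν : G.Path} (h : G.r ν = v) :
    strip G (G.ident v) ν = ν := by
  have hc : G.comp (G.ident v) ν = ν := by rw [← h]; exact G.ident_comp ν
  have := strip_comp G (lam := G.ident v) (η := ν) (by rw [G.s_ident, h])
  rw [hc] at this
  exact this

/-- The raw creation-type operator. -/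
noncomputable def Wfun (lam : G.Path) (x : G.Path → ℂ) : G.Path → ℂ :=
  fun ν => if h : G.Extends ν lam then x (strip G lam ν) else 0

/-- The raw annihilation-type operator (candidate adjoint of `Wfun`). -/
noncomputable def Vfun (lam : G.Path) (x : G.Path → ℂ) : G.Path → ℂ :=
  fun μ => if G.s lam = G.r μ then x (G.comp lam μ) else 0

lemma Wfun_comp (lam : G.Path) (x : G.Path → ℂ) {η : G.Path} (h : G.s lam = G.r η) :
    Wfun G lam x (G.comp lam η) = x η := by
  rw [Wfun, dif_pos ⟨η, h, rfl⟩, strip_comp G h]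

/-- The canonical injection from paths with range `s lam` into extensions of `lam`. -/
def fInj (lam : G.Path) : {η : G.Path // G.s lam = G.r η} → G.Path :=
  fun η => G.comp lam η.1

lemma fInj_injective (lam : G.Path) : Function.Injective (fInj G lam) := by
  rintro ⟨a, ha⟩ ⟨b, hb⟩ h
  exact Subtype.ext (cancel_left G ha hb h)

lemma mem_range_fInj {lam ν : G.Path} :
    ν ∈ Set.range (fInj G lam) ↔ G.Extends ν lam := by
  constructor
  · rintro ⟨⟨η, hη⟩, rfl⟩; exact ⟨η, hη, rfl⟩
  · rintro ⟨η, h1, rfl⟩; exact ⟨⟨η, h1⟩, rfl⟩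

lemma q_pos : (0:ℝ) < (2 : ENNReal).toReal := by norm_num

lemma Wfun_memℓp (lam : G.Path) (x : lp (fun _ : G.Path => ℂ) 2) :
    Memℓp (Wfun G lam ⇑x) 2 := by
  apply memℓp_gen
  set q := (2 : ENNReal).toReal with hq
  have hx : Summable fun μ : G.Path => ‖x μ‖ ^ q := (lp.memℓp x).summable q_pos
  have hvan : ∀ ν ∉ Set.range (fInj G lam), ‖Wfun G lam ⇑x ν‖ ^ q = 0 := by
    intro ν hν
    rw [Wfun, dif_neg (fun h => hν ((mem_range_fInj G).mpr h))]
    simp only [norm_zero]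
    exact Real.zero_rpow (by norm_num [hq])
  refine ((fInj_injective G lam).summable_iff hvan).mp ?_
  have : (fun η : {η : G.Path // G.s lam = G.r η} =>
      ‖Wfun G lam ⇑x (fInj G lam η)‖ ^ q) = fun η => ‖x η.1‖ ^ q := by
    funext η
    rw [fInj, Wfun_comp G lam ⇑x η.2]
  show Summable ((fun ν => ‖Wfun G lam ⇑x ν‖ ^ q) ∘ fInj G lam)
  rw [Function.comp_def]
  rw [this]
  exact hx.subtype {η : G.Path | G.s lam = G.r η}

lemma Wfun_norm_le (lam : G.Path) (x : lp (fun _ : G.Path => ℂ) 2) :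
    ∑' ν, ‖Wfun G lam ⇑x ν‖ ^ (2 : ENNReal).toReal ≤ ‖x‖ ^ (2 : ENNReal).toReal := by
  set q := (2 : ENNReal).toReal with hq
  have hx : Summable fun μ : G.Path => ‖x μ‖ ^ q := (lp.memℓp x).summable q_pos
  have hvan : ∀ ν ∉ Set.range (fInj G lam), ‖Wfun G lam ⇑x ν‖ ^ q = 0 := by
    intro ν hν
    rw [Wfun, dif_neg (fun h => hν ((mem_range_fInj G).mpr h))]
    simp only [norm_zero]
    exact Real.zero_rpow (by norm_num [hq])
  have h1 : ∑' (η : {η : G.Path // G.s lam = G.r η}), ‖Wfun G lam ⇑x (fInj G lam η)‖ ^ q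
      = ∑' ν, ‖Wfun G lam ⇑x ν‖ ^ q := by
    exact Function.Injective.tsum_eq (fInj_injective G lam)
      (f := fun ν => ‖Wfun G lam ⇑x ν‖ ^ q) (Function.support_subset_iff'.mpr hvan)
  rw [← h1]
  have h2 : (fun η : {η : G.Path // G.s lam = G.r η} =>
      ‖Wfun G lam ⇑x (fInj G lam η)‖ ^ q) = fun η => ‖x η.1‖ ^ q := by
    funext η
    rw [fInj, Wfun_comp G lam ⇑x η.2]
  rw [h2]
  calc ∑' (η : {η : G.Path // G.s lam = G.r η}), ‖x η.1‖ ^ q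
      ≤ ∑' μ : G.Path, ‖x μ‖ ^ q := Summable.tsum_subtype_le (fun μ : G.Path => ‖x μ‖ ^ q) _
        (fun μ => Real.rpow_nonneg (norm_nonneg _) _) hx
    _ = ‖x‖ ^ q := (lp.norm_rpow_eq_tsum q_pos x).symm

lemma Vfun_memℓp_aux (lam : G.Path) (x : lp (fun _ : G.Path => ℂ) 2) :
    Summable (fun μ : G.Path => ‖Vfun G lam ⇑x μ‖ ^ (2 : ENNReal).toReal) := by
  set q := (2 : ENNReal).toReal with hq
  have hx : Summable fun μ : G.Path => ‖x μ‖ ^ q := (lp.memℓp x).summable q_pos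
  have hvan : ∀ μ ∉ Set.range (Subtype.val : {η : G.Path // G.s lam = G.r η} → G.Path),
      ‖Vfun G lam ⇑x μ‖ ^ q = 0 := by
    intro μ hμ
    have : ¬ G.s lam = G.r μ := fun h => hμ ⟨⟨μ, h⟩, rfl⟩
    rw [Vfun, if_neg this]
    simp only [norm_zero]
    exact Real.zero_rpow (by norm_num [hq])
  refine (Subtype.val_injective.summable_iff hvan).mp ?_
  have : ((fun μ => ‖Vfun G lam ⇑x μ‖ ^ q) ∘ (Subtype.val : {η : G.Path // G.s lam = G.r η} → G.Path))
      = (fun ν => ‖x ν‖ ^ q) ∘ fInj G lam := by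
    funext η
    show ‖Vfun G lam ⇑x η.1‖ ^ q = _
    rw [Vfun]
    rw [if_pos η.2]
    rfl
  rw [this]
  exact hx.comp_injective (fInj_injective G lam)

lemma Vfun_norm_le (lam : G.Path) (x : lp (fun _ : G.Path => ℂ) 2) :
    ∑' ν, ‖Vfun G lam ⇑x ν‖ ^ (2 : ENNReal).toReal ≤ ‖x‖ ^ (2 : ENNReal).toReal := by
  set q := (2 : ENNReal).toReal with hq
  have hx : Summable fun μ : G.Path => ‖x μ‖ ^ q := (lp.memℓp x).summable q_pos
  have hvan : ∀ μ ∉ Set.range (Subtype.val : {η : G.Path // G.s lam = G.r η} → G.Path),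
      ‖Vfun G lam ⇑x μ‖ ^ q = 0 := by
    intro μ hμ
    have : ¬ G.s lam = G.r μ := fun h => hμ ⟨⟨μ, h⟩, rfl⟩
    rw [Vfun, if_neg this]
    simp only [norm_zero]
    exact Real.zero_rpow (by norm_num [hq])
  have h1 : ∑' (η : {η : G.Path // G.s lam = G.r η}), ‖Vfun G lam ⇑x η.1‖ ^ q
      = ∑' ν, ‖Vfun G lam ⇑x ν‖ ^ q := by
    exact Function.Injective.tsum_eq Subtype.val_injective
      (f := fun ν => ‖Vfun G lam ⇑x ν‖ ^ q) (Function.support_subset_iff'.mpr hvan)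
  rw [← h1]
  have h2 : (fun η : {η : G.Path // G.s lam = G.r η} => ‖Vfun G lam ⇑x η.1‖ ^ q)
      = fun η => ‖x (fInj G lam η)‖ ^ q := by
    funext η
    rw [Vfun, if_pos η.2]
    rfl
  rw [h2]
  calc ∑' (η : {η : G.Path // G.s lam = G.r η}), ‖x (fInj G lam η)‖ ^ q
      ≤ ∑' μ : G.Path, ‖x μ‖ ^ q := (hx.comp_injective (fInj_injective G lam)).tsum_le_tsum_of_inj
        (fInj G lam) (fInj_injective G lam)
        (fun ν _ => Real.rpow_nonneg (norm_nonneg _) _) (fun η => le_rfl) hx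
    _ = ‖x‖ ^ q := (lp.norm_rpow_eq_tsum q_pos x).symm

lemma Vfun_memℓp (lam : G.Path) (x : lp (fun _ : G.Path => ℂ) 2) :
    Memℓp (Vfun G lam ⇑x) 2 :=
  memℓp_gen (Vfun_memℓp_aux G lam x)

/-- The bounded operator `w_lam`. -/
noncomputable def Wop (lam : G.Path) :
    lp (fun _ : G.Path => ℂ) 2 →L[ℂ] lp (fun _ : G.Path => ℂ) 2 :=
  LinearMap.mkContinuous
    { toFun := fun x => ⟨Wfun G lam ⇑x, Wfun_memℓp G lam x⟩
      map_add' := fun x y => by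
        apply lp.ext
        funext ν
        show Wfun G lam ⇑(x + y) ν = (Wfun G lam ⇑x + Wfun G lam ⇑y) ν
        rw [lp.coeFn_add, Pi.add_apply, Wfun, Wfun, Wfun]
        split_ifs with h
        · rfl
        · simp
      map_smul' := fun c x => by
        apply lp.ext
        funext ν
        show Wfun G lam ⇑(c • x) ν = (c • Wfun G lam ⇑x) ν
        rw [lp.coeFn_smul, Pi.smul_apply, Wfun, Wfun]
        split_ifs with h
        · rfl
        · simp }
    1
    (fun x => by
      rw [one_mul]
      exact lp.norm_le_of_tsum_le q_pos (norm_nonneg x) (Wfun_norm_le G lam x))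

/-- The bounded operator `w_lam*`. -/
noncomputable def Vop (lam : G.Path) :
    lp (fun _ : G.Path => ℂ) 2 →L[ℂ] lp (fun _ : G.Path => ℂ) 2 :=
  LinearMap.mkContinuous
    { toFun := fun x => ⟨Vfun G lam ⇑x, Vfun_memℓp G lam x⟩
      map_add' := fun x y => by
        apply lp.ext
        funext ν
        show Vfun G lam ⇑(x + y) ν = (Vfun G lam ⇑x + Vfun G lam ⇑y) ν
        rw [lp.coeFn_add, Pi.add_apply, Vfun, Vfun, Vfun]
        split_ifs with h
        · rfl
        · simp
      map_smul' := fun c x => by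
        apply lp.ext
        funext ν
        show Vfun G lam ⇑(c • x) ν = (c • Vfun G lam ⇑x) ν
        rw [lp.coeFn_smul, Pi.smul_apply, Vfun, Vfun]
        split_ifs with h
        · rfl
        · simp }
    1
    (fun x => by
      rw [one_mul]
      exact lp.norm_le_of_tsum_le q_pos (norm_nonneg x) (Vfun_norm_le G lam x))

@[simp] lemma Wop_apply (lam : G.Path) (x : lp (fun _ : G.Path => ℂ) 2) (ν : G.Path) :
    (Wop G lam x : G.Path → ℂ) ν = Wfun G lam ⇑x ν := rfl

@[simp] lemma Vop_apply (lam : G.Path) (x : lp (fun _ : G.Path => ℂ) 2) (ν : G.Path) :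
    (Vop G lam x : G.Path → ℂ) ν = Vfun G lam ⇑x ν := rfl

lemma adjoint_Wop (lam : G.Path) :
    ContinuousLinearMap.adjoint (Wop G lam) = Vop G lam := by
  symm
  rw [ContinuousLinearMap.eq_adjoint_iff]
  intro x y
  rw [lp.inner_eq_tsum, lp.inner_eq_tsum]
  simp only [RCLike.inner_apply, Wop_apply, Vop_apply]
  have hsupp1 : Function.support (fun μ => (starRingEnd ℂ) (Vfun G lam ⇑x μ) * y μ) ⊆
      Set.range (Subtype.val : {η : G.Path // G.s lam = G.r η} → G.Path) := by
    apply Function.support_subset_iff'.mpr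
    intro μ hμ
    have : ¬ G.s lam = G.r μ := fun h => hμ ⟨⟨μ, h⟩, rfl⟩
    rw [Vfun, if_neg this, map_zero, zero_mul]
  have hsupp2 : Function.support (fun ν => (starRingEnd ℂ) (x ν) * Wfun G lam ⇑y ν) ⊆
      Set.range (fInj G lam) := by
    apply Function.support_subset_iff'.mpr
    intro ν hν
    rw [Wfun, dif_neg (fun h => hν ((mem_range_fInj G).mpr h)), mul_zero]
  rw [tsum_congr (fun μ => mul_comm (y μ) _), tsum_congr (fun ν => mul_comm (Wfun G lam ⇑y ν) _)]
  calc ∑' μ, (starRingEnd ℂ) (Vfun G lam ⇑x μ) * y μ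
      = ∑' (η : {η : G.Path // G.s lam = G.r η}),
          (starRingEnd ℂ) (Vfun G lam ⇑x η.1) * y η.1 :=
        (Function.Injective.tsum_eq Subtype.val_injective
          (f := fun μ => (starRingEnd ℂ) (Vfun G lam ⇑x μ) * y μ) hsupp1).symm
    _ = ∑' (η : {η : G.Path // G.s lam = G.r η}),
          (starRingEnd ℂ) (x (fInj G lam η)) * Wfun G lam ⇑y (fInj G lam η) := by
        apply tsum_congr
        intro η
        rw [Vfun, if_pos η.2, fInj, Wfun_comp G lam ⇑y η.2]
    _ = ∑' ν, (starRingEnd ℂ) (x ν) * Wfun G lam ⇑y ν :=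
        Function.Injective.tsum_eq (fInj_injective G lam)
          (f := fun ν => (starRingEnd ℂ) (x ν) * Wfun G lam ⇑y ν) hsupp2

lemma Wfun_ident (v : G.Obj) (x : G.Path → ℂ) (ν : G.Path) :
    Wfun G (G.ident v) x ν = if G.r ν = v then x ν else 0 := by
  rw [Wfun]
  by_cases h : G.r ν = v
  · rw [dif_pos ((extends_ident G).mpr h), if_pos h, strip_ident G h]
  · rw [dif_neg (fun he => h ((extends_ident G).mp he)), if_neg h]

lemma Vfun_ident (v : G.Obj) (x : G.Path → ℂ) (ν : G.Path) :
    Vfun G (G.ident v) x ν = if G.r ν = v then x ν else 0 := by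
  rw [Vfun]
  by_cases h : G.r ν = v
  · have hs : G.s (G.ident v) = G.r ν := by rw [G.s_ident, h]
    have hc : G.comp (G.ident v) ν = ν := by rw [← h]; exact G.ident_comp ν
    rw [if_pos hs, if_pos h, hc]
  · have hs : ¬ G.s (G.ident v) = G.r ν := fun he => h (by rw [G.s_ident] at he; exact he.symm)
    rw [if_neg hs, if_neg h]

end Stmt15Aux

open Classical in
/-- for a finitely aligned `k`-graph `Λ` there are bounded
operators `w_lam` on `ℓ²(Λ)` with `w_lam ξ_μ = δ_{s(lam), r(μ)} ξ_{lam μ}`,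
whose adjoints satisfy `w_lam* ξ_ν = ξ_η` if `ν = lam η` and `w_lam* ξ_ν = 0`
otherwise, and `{w_lam}` is a Toeplitz–Cuntz–Krieger `Λ`-family. -/
theorem stmt15 {k : ℕ} (G : KGraph k) (hfa : G.FinitelyAligned) :
    ∃ w : G.Path → (lp (fun _ : G.Path => ℂ) 2 →L[ℂ] lp (fun _ : G.Path => ℂ) 2),
      (∀ lam μ : G.Path,
        w lam (lp.single 2 μ (1 : ℂ)) =
          if G.s lam = G.r μ then lp.single 2 (G.comp lam μ) (1 : ℂ) else 0) ∧
      (∀ lam ν η : G.Path, G.s lam = G.r η → ν = G.comp lam η →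
        ContinuousLinearMap.adjoint (w lam) (lp.single 2 ν (1 : ℂ)) =
          lp.single 2 η (1 : ℂ)) ∧
      (∀ lam ν : G.Path, ¬ G.Extends ν lam →
        ContinuousLinearMap.adjoint (w lam) (lp.single 2 ν (1 : ℂ)) = 0) ∧
      (∀ v : G.Obj, ContinuousLinearMap.adjoint (w (G.ident v)) = w (G.ident v)) ∧
      (∀ v : G.Obj, w (G.ident v) ∘L w (G.ident v) = w (G.ident v)) ∧
      (∀ v v' : G.Obj, v ≠ v' → w (G.ident v) ∘L w (G.ident v') = 0) ∧
      (∀ μ ν : G.Path, G.s μ = G.r ν → w (G.comp μ ν) = w μ ∘L w ν) ∧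
      (∀ μ ν : G.Path,
        ContinuousLinearMap.adjoint (w μ) ∘L w ν =
          ∑ p ∈ (hfa μ ν).toFinset,
            w p.1 ∘L ContinuousLinearMap.adjoint (w p.2)) := by
  classical
  refine ⟨Stmt15Aux.Wop G, ?_, ?_, ?_, ?_, ?_, ?_, ?_, ?_⟩
  -- (1) action on basis vectors
  · intro lam μ
    by_cases hs : G.s lam = G.r μ
    · rw [if_pos hs]
      apply lp.ext
      funext ν
      rw [Stmt15Aux.Wop_apply]
      by_cases hν : ν = G.comp lam μ
      · subst hν
        rw [Stmt15Aux.Wfun_comp G lam _ hs, lp.single_apply_self, lp.single_apply_self]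
      · rw [lp.single_apply_ne 2 _ _ hν, Stmt15Aux.Wfun]
        split_ifs with hext
        · obtain ⟨h1, h2⟩ := Stmt15Aux.strip_spec G hext
          exact lp.single_apply_ne 2 _ _ (fun hEq => hν (by rw [h2, hEq]))
        · rfl
    · rw [if_neg hs]
      apply lp.ext
      funext ν
      rw [Stmt15Aux.Wop_apply, lp.coeFn_zero, Pi.zero_apply, Stmt15Aux.Wfun]
      split_ifs with hext
      · obtain ⟨h1, h2⟩ := Stmt15Aux.strip_spec G hext
        exact lp.single_apply_ne 2 _ _ (fun hEq => hs (by rw [hEq] at h1; exact h1))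
      · rfl
  -- (2) adjoint on basis vectors, extension case
  · intro lam ν η h1 h2
    subst h2
    rw [Stmt15Aux.adjoint_Wop]
    apply lp.ext
    funext μ
    rw [Stmt15Aux.Vop_apply, Stmt15Aux.Vfun]
    by_cases hμ : μ = η
    · subst hμ
      rw [if_pos h1, lp.single_apply_self, lp.single_apply_self]
    · rw [lp.single_apply_ne 2 _ _ hμ]
      split_ifs with hsμ
      · exact lp.single_apply_ne 2 _ _
          (fun hc => hμ (Stmt15Aux.cancel_left G hsμ h1 hc))
      · rfl
  -- (3) adjoint on basis vectors, zero case
  · intro lam ν hne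
    rw [Stmt15Aux.adjoint_Wop]
    apply lp.ext
    funext μ
    rw [Stmt15Aux.Vop_apply, Stmt15Aux.Vfun, lp.coeFn_zero, Pi.zero_apply]
    split_ifs with hsμ
    · exact lp.single_apply_ne 2 _ _ (fun hc => hne ⟨μ, hsμ, hc.symm⟩)
    · rfl
  -- (4) projections are self-adjoint
  · intro v
    rw [Stmt15Aux.adjoint_Wop]
    apply ContinuousLinearMap.ext
    intro x
    apply lp.ext
    funext ν
    rw [Stmt15Aux.Vop_apply, Stmt15Aux.Wop_apply, Stmt15Aux.Vfun_ident, Stmt15Aux.Wfun_ident]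
  -- (5) idempotent
  · intro v
    apply ContinuousLinearMap.ext
    intro x
    apply lp.ext
    funext ν
    rw [ContinuousLinearMap.comp_apply, Stmt15Aux.Wop_apply, Stmt15Aux.Wfun_ident,
      Stmt15Aux.Wop_apply, Stmt15Aux.Wfun_ident]
    split_ifs <;> rfl
  -- (6) orthogonal
  · intro v v' hvv
    apply ContinuousLinearMap.ext
    intro x
    apply lp.ext
    funext ν
    rw [ContinuousLinearMap.comp_apply, Stmt15Aux.Wop_apply, Stmt15Aux.Wfun_ident,
      Stmt15Aux.Wop_apply, Stmt15Aux.Wfun_ident, ContinuousLinearMap.zero_apply,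
      lp.coeFn_zero, Pi.zero_apply]
    split_ifs with hv1 hv2
    · exact absurd (hv1.symm.trans hv2) hvv
    · rfl
    · rfl
  -- (7) multiplicative
  · intro μ ν hsμν
    apply ContinuousLinearMap.ext
    intro x
    apply lp.ext
    funext ρ
    rw [ContinuousLinearMap.comp_apply, Stmt15Aux.Wop_apply, Stmt15Aux.Wop_apply]
    by_cases h : G.Extends ρ (G.comp μ ν)
    · obtain ⟨ζ, hz1, hz2⟩ := h
      have hzν : G.s ν = G.r ζ := by rw [← G.s_comp μ ν hsμν]; exact hz1
      have hrζ : G.s μ = G.r (G.comp ν ζ) := by rw [G.r_comp ν ζ hzν]; exact hsμν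
      have hρ : ρ = G.comp μ (G.comp ν ζ) := by rw [hz2, G.comp_assoc μ ν ζ hsμν hzν]
      have hL : Stmt15Aux.Wfun G (G.comp μ ν) ⇑x ρ = x ζ := by
        rw [hz2, Stmt15Aux.Wfun_comp G _ _ hz1]
      have hR : Stmt15Aux.Wfun G μ ⇑(Stmt15Aux.Wop G ν x) ρ = x ζ := by
        rw [hρ, Stmt15Aux.Wfun_comp G _ _ hrζ, Stmt15Aux.Wop_apply,
          Stmt15Aux.Wfun_comp G _ _ hzν]
      rw [hL, hR]
    · rw [Stmt15Aux.Wfun, dif_neg h, Stmt15Aux.Wfun]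
      split_ifs with hE
      · obtain ⟨hE1, hE2⟩ := Stmt15Aux.strip_spec G hE
        rw [Stmt15Aux.Wop_apply, Stmt15Aux.Wfun]
        split_ifs with hE'
        · exfalso
          obtain ⟨ζ, hz1, hz2⟩ := hE'
          refine h ⟨ζ, ?_, ?_⟩
          · rw [G.s_comp μ ν hsμν]; exact hz1
          · rw [hE2, hz2, G.comp_assoc μ ν ζ hsμν hz1]
        · rfl
      · rfl
  -- (8) Toeplitz-Cuntz-Krieger relation
  · intro μ ν
    simp only [Stmt15Aux.adjoint_Wop]
    apply ContinuousLinearMap.ext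
    intro x
    apply lp.ext
    funext ρ
    rw [ContinuousLinearMap.comp_apply, Stmt15Aux.Vop_apply,
      ContinuousLinearMap.sum_apply, lp.coeFn_sum, Finset.sum_apply]
    simp only [ContinuousLinearMap.comp_apply, Stmt15Aux.Wop_apply]
    by_cases h1 : G.s μ = G.r ρ
    · by_cases h2 : G.Extends (G.comp μ ρ) ν
      · -- the common-extension case
        obtain ⟨hσ1, hσ2⟩ := Stmt15Aux.strip_spec G h2
        have hdlam : G.d (G.comp μ ρ) = G.d μ + G.d ρ := G.d_comp μ ρ h1
        have hdlam2 : G.d (G.comp μ ρ) = G.d ν + G.d (Stmt15Aux.strip G ν (G.comp μ ρ)) := by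
          conv_lhs => rw [hσ2]
          exact G.d_comp ν _ hσ1
        have hμm : G.d μ ≤ G.d μ ⊔ G.d ν := le_sup_left
        have hνm : G.d ν ≤ G.d μ ⊔ G.d ν := le_sup_right
        have hmlam : G.d μ ⊔ G.d ν ≤ G.d (G.comp μ ρ) :=
          sup_le (hdlam ▸ le_self_add) (hdlam2 ▸ le_self_add)
        have hfρ : G.d ρ = ((G.d μ ⊔ G.d ν) - G.d μ) + (G.d (G.comp μ ρ) - (G.d μ ⊔ G.d ν)) := by
          funext i
          have h1i := hμm i
          have h2i := hmlam i
          have h3i := congrFun hdlam i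
          simp only [Pi.add_apply, Pi.sub_apply, Pi.sup_apply] at h1i h2i h3i ⊢
          omega
        obtain ⟨pp, ⟨hpp1, hpp2, hpp3, hpp4⟩, hppu⟩ :=
          G.factor ρ ((G.d μ ⊔ G.d ν) - G.d μ) (G.d (G.comp μ ρ) - (G.d μ ⊔ G.d ν)) hfρ
        have hfσ : G.d (Stmt15Aux.strip G ν (G.comp μ ρ)) =
            ((G.d μ ⊔ G.d ν) - G.d ν) + (G.d (G.comp μ ρ) - (G.d μ ⊔ G.d ν)) := by
          funext i
          have h1i := hνm i
          have h2i := hmlam i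
          have h3i := congrFun hdlam2 i
          simp only [Pi.add_apply, Pi.sub_apply, Pi.sup_apply] at h1i h2i h3i ⊢
          omega
        obtain ⟨qq, ⟨hqq1, hqq2, hqq3, hqq4⟩, hqqu⟩ :=
          G.factor (Stmt15Aux.strip G ν (G.comp μ ρ))
            ((G.d μ ⊔ G.d ν) - G.d ν) (G.d (G.comp μ ρ) - (G.d μ ⊔ G.d ν)) hfσ
        have hrα : G.s μ = G.r pp.1 := by
          rw [h1, hpp4, G.r_comp pp.1 pp.2 hpp1]
        have hsβ : G.s ν = G.r qq.1 := by
          rw [hσ1, hqq4, G.r_comp qq.1 qq.2 hqq1]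
        have hdμα : G.d (G.comp μ pp.1) = G.d μ ⊔ G.d ν := by
          rw [G.d_comp μ pp.1 hrα, hpp2]
          funext i
          have h1i := hμm i
          simp only [Pi.add_apply, Pi.sub_apply, Pi.sup_apply] at h1i ⊢
          omega
        have hdνβ : G.d (G.comp ν qq.1) = G.d μ ⊔ G.d ν := by
          rw [G.d_comp ν qq.1 hsβ, hqq2]
          funext i
          have h1i := hνm i
          simp only [Pi.add_apply, Pi.sub_apply, Pi.sup_apply] at h1i ⊢
          omega
        have hflam : G.d (G.comp μ ρ) =
            (G.d μ ⊔ G.d ν) + (G.d (G.comp μ ρ) - (G.d μ ⊔ G.d ν)) := by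
          funext i
          have h2i := hmlam i
          simp only [Pi.add_apply, Pi.sub_apply, Pi.sup_apply] at h2i ⊢
          omega
        obtain ⟨PP, hPP, hPPu⟩ :=
          G.factor (G.comp μ ρ) (G.d μ ⊔ G.d ν) (G.d (G.comp μ ρ) - (G.d μ ⊔ G.d ν)) hflam
        have e1 : (G.comp μ pp.1, pp.2) = PP :=
          hPPu _ ⟨by rw [G.s_comp μ pp.1 hrα]; exact hpp1, hdμα, hpp3,
            by rw [hpp4, ← G.comp_assoc μ pp.1 pp.2 hrα hpp1]⟩
        have e2 : (G.comp ν qq.1, qq.2) = PP :=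
          hPPu _ ⟨by rw [G.s_comp ν qq.1 hsβ]; exact hqq1, hdνβ, hqq3,
            by rw [hσ2, hqq4, ← G.comp_assoc ν qq.1 qq.2 hsβ hqq1]⟩
        have hμν : G.comp μ pp.1 = G.comp ν qq.1 := (Prod.ext_iff.mp (e1.trans e2.symm)).1
        have h22 : pp.2 = qq.2 := (Prod.ext_iff.mp (e1.trans e2.symm)).2
        have hp₀ : (pp.1, qq.1) ∈ G.minPairs μ ν :=
          ⟨hrα, hsβ, hμν, ⟨⟨pp.1, hrα, rfl⟩, ⟨qq.1, hsβ, hμν⟩⟩, hdμα⟩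
        have hmem : (pp.1, qq.1) ∈ (hfa μ ν).toFinset :=
          (Set.Finite.mem_toFinset _).mpr hp₀
        have hside : ∀ b ∈ (hfa μ ν).toFinset, b ≠ (pp.1, qq.1) →
            Stmt15Aux.Wfun G b.1 ⇑(Stmt15Aux.Vop G b.2 x) ρ = 0 := by
          intro b hb hbne
          rw [Stmt15Aux.Wfun]
          split_ifs with hEb
          · exfalso
            obtain ⟨τ, hτ1, hτ2⟩ := hEb
            obtain ⟨hb1, hb2, hb3, _, hbd⟩ := (Set.Finite.mem_toFinset _).mp hb
            have hdb1 : G.d b.1 = (G.d μ ⊔ G.d ν) - G.d μ := by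
              have hd := G.d_comp μ b.1 hb1
              rw [hbd] at hd
              funext i
              have hdi := congrFun hd i
              have h1i := hμm i
              simp only [Pi.add_apply, Pi.sub_apply, Pi.sup_apply] at hdi h1i ⊢
              omega
            have hdτ : G.d τ = G.d (G.comp μ ρ) - (G.d μ ⊔ G.d ν) := by
              have hdρ : G.d ρ = G.d b.1 + G.d τ := by
                rw [hτ2]
                exact G.d_comp b.1 τ hτ1
              funext i
              have hdi := congrFun hdρ i
              have hbi := congrFun hdb1 i
              have h3i := congrFun hdlam i
              have h1i := hμm i
              have h2i := hmlam i
              simp only [Pi.add_apply, Pi.sub_apply, Pi.sup_apply] at hdi hbi h3i h1i h2i ⊢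
              omega
            have heq : (b.1, τ) = pp := hppu (b.1, τ) ⟨hτ1, hdb1, hdτ, hτ2⟩
            have hb1p : b.1 = pp.1 := (Prod.ext_iff.mp heq).1
            have hb2p : b.2 = qq.1 :=
              Stmt15Aux.cancel_left G hb2 hsβ (by rw [← hb3, hb1p]; exact hμν)
            exact hbne (Prod.ext hb1p hb2p)
          · rfl
        rw [Finset.sum_eq_single_of_mem (pp.1, qq.1) hmem hside]
        change _ = Stmt15Aux.Wfun G pp.1 ⇑(Stmt15Aux.Vop G qq.1 x) ρ
        rw [Stmt15Aux.Vfun, if_pos h1, Stmt15Aux.Wop_apply, Stmt15Aux.Wfun, dif_pos h2]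
        have hExt : G.Extends ρ pp.1 := ⟨pp.2, hpp1, hpp4⟩
        have hst : Stmt15Aux.strip G pp.1 ρ = pp.2 := by
          rw [hpp4, Stmt15Aux.strip_comp G hpp1]
        rw [Stmt15Aux.Wfun, dif_pos hExt, hst, Stmt15Aux.Vop_apply, Stmt15Aux.Vfun,
          if_pos (show G.s qq.1 = G.r pp.2 by rw [h22]; exact hqq1)]
        rw [hqq4, h22]
      · -- no common extension through ρ : both sides vanish
        rw [Stmt15Aux.Vfun, if_pos h1, Stmt15Aux.Wop_apply, Stmt15Aux.Wfun, dif_neg h2]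
        symm
        apply Finset.sum_eq_zero
        intro b hb
        obtain ⟨hb1, hb2, hb3, _⟩ := (Set.Finite.mem_toFinset _).mp hb
        rw [Stmt15Aux.Wfun]
        refine dif_neg ?_
        rintro ⟨τ, hτ1, hτ2⟩
        apply h2
        have hsτ : G.s b.2 = G.r τ := by
          have e1 : G.s b.2 = G.s (G.comp ν b.2) := (G.s_comp ν b.2 hb2).symm
          rw [← hb3, G.s_comp μ b.1 hb1] at e1
          rw [e1]; exact hτ1
        refine ⟨G.comp b.2 τ, ?_, ?_⟩
        · rw [G.r_comp b.2 τ hsτ]; exact hb2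
        · rw [hτ2, ← G.comp_assoc μ b.1 τ hb1 hτ1, hb3, G.comp_assoc ν b.2 τ hb2 hsτ]
    · -- sources do not match: both sides vanish
      rw [Stmt15Aux.Vfun, if_neg h1]
      symm
      apply Finset.sum_eq_zero
      intro b hb
      obtain ⟨hb1, hb2, hb3, _⟩ := (Set.Finite.mem_toFinset _).mp hb
      rw [Stmt15Aux.Wfun]
      refine dif_neg ?_
      rintro ⟨τ, hτ1, hτ2⟩
      apply h1
      rw [hb1, hτ2, G.r_comp b.1 τ hτ1]
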